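/- In blind deconvolution with subspace constraints: for all n, m₁, m₂ with n ≥ m₁m₂, for almost all D ∈ ℂ^{n×m₁} and E ∈ ℂ^{n×m₂}, every pair (x₀,y₀) ∈ ℂ^{m₁} × ℂ^{m₂} with x₀ ≠ 0 and y₀ ≠ 0 is identifiable up to scaling from z = (Dx₀) ⊛ (Ey₀); i.e., any (x,y) with (Dx) ⊛ (Ey) = (Dx₀) ⊛ (Ey₀) satisfies x = σx₀, y = σ^{-1}y₀ for some nonzero σ ∈ ℂ. -/

import Mathlib

open MeasureTheory

/-- Circular convolution of two vectors in `ℂ^n`. -/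
noncomputable def cconv {n : ℕ} (u v : Fin n → ℂ) : Fin n → ℂ :=
  fun i => ∑ j, u j * v (i - j)

/-- Matrix-vector multiplication. -/
noncomputable def mulVecF {n m : ℕ} (A : Fin n → Fin m → ℂ) (x : Fin m → ℂ) : Fin n → ℂ :=
  fun i => ∑ j, A i j * x j

lemma measurable_mvpoly_eval {ι : Type*} (p : MvPolynomial ι ℂ) :
    Measurable fun x : ι → ℂ => MvPolynomial.eval x p := by
  induction p using MvPolynomial.induction_on with
  | C a => simpa using measurable_const
  | add p q hp hq => simp only [map_add]; exact hp.add hq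
  | mul_X p i hp => simp only [map_mul, MvPolynomial.eval_X]; exact hp.mul (measurable_pi_apply i)

lemma mv_zero_set_null : ∀ (N : ℕ) (p : MvPolynomial (Fin N) ℂ), p ≠ 0 →
    volume {x : Fin N → ℂ | MvPolynomial.eval x p = 0} = 0 := by
  intro N
  induction N with
  | zero =>
    intro p hp
    obtain ⟨a, rfl⟩ := MvPolynomial.C_surjective (Fin 0) p
    have ha : a ≠ 0 := fun h => hp (by simp [h])
    have : {x : Fin 0 → ℂ | MvPolynomial.eval x (MvPolynomial.C a) = 0} = ∅ := by
      ext x; simp [ha]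
    rw [this]; simp
  | succ N ih =>
    intro p hp
    set q := MvPolynomial.finSuccEquiv ℂ N p with hqdef
    have hq0 : q ≠ 0 := by
      intro h
      apply hp
      apply (MvPolynomial.finSuccEquiv ℂ N).injective
      rw [← hqdef, h, map_zero]
    obtain ⟨d, hd⟩ : ∃ d, q.coeff d ≠ 0 := by
      by_contra h
      push_neg at h
      exact hq0 (Polynomial.ext fun d => by simp [h d])
    have hFmeas : Measurable fun sy : (Fin N → ℂ) × ℂ =>
        Polynomial.eval sy.2 (Polynomial.map (MvPolynomial.eval sy.1) q) := by
      simp_rw [Polynomial.eval_map, Polynomial.eval₂_eq_sum_range]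
      exact Finset.measurable_sum _ fun i _ =>
        ((measurable_mvpoly_eval _).comp measurable_fst).mul (measurable_snd.pow_const i)
    set T' : Set ((Fin N → ℂ) × ℂ) :=
      {sy | Polynomial.eval sy.2 (Polynomial.map (MvPolynomial.eval sy.1) q) = 0} with hT'def
    have hT'meas : MeasurableSet T' := hFmeas (measurableSet_singleton 0)
    have hT'null : (volume : Measure ((Fin N → ℂ) × ℂ)) T' = 0 := by
      rw [Measure.volume_eq_prod, Measure.measure_prod_null hT'meas]
      have hae : ∀ᵐ s : Fin N → ℂ ∂volume, MvPolynomial.eval s (q.coeff d) ≠ 0 := by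
        rw [MeasureTheory.ae_iff]
        push_neg
        exact ih _ hd
      filter_upwards [hae] with s hs
      have hmapne : Polynomial.map (MvPolynomial.eval s) q ≠ 0 := by
        intro h
        apply hs
        have := congrArg (fun r => Polynomial.coeff r d) h
        simpa [Polynomial.coeff_map] using this
      have hsub : (Prod.mk s ⁻¹' T') ⊆ {y : ℂ | (Polynomial.map (MvPolynomial.eval s) q).IsRoot y} := by
        intro y hy
        exact hy
      simpa using measure_mono_null hsub
        ((Polynomial.finite_setOf_isRoot hmapne).measure_zero _)
    -- transfer via piFinSuccAbove
    set e := MeasurableEquiv.piFinSuccAbove (fun _ : Fin (N + 1) => ℂ) 0 with hedef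
    have hmp : MeasurePreserving e volume volume := volume_preserving_piFinSuccAbove _ 0
    have hkey : {x : Fin (N + 1) → ℂ | MvPolynomial.eval x p = 0}
        = e ⁻¹' (Prod.swap ⁻¹' T') := by
      ext x
      have hx : x = Fin.cons (x 0) (Fin.tail x) := (Fin.cons_self_tail x).symm
      have he1 : (e x).1 = x 0 := rfl
      have he2 : (e x).2 = fun j : Fin N => x ((0 : Fin (N+1)).succAbove j) := rfl
      simp only [Set.mem_preimage, Set.mem_setOf_eq, hT'def, Prod.swap]
      constructor
      · intro h
        show Polynomial.eval (e x).1 (Polynomial.map (MvPolynomial.eval (e x).2) q) = 0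
        rw [he1, he2]
        rw [hx] at h
        rw [← MvPolynomial.eval_eq_eval_mv_eval']
        convert h using 2
        congr 1
      · intro h
        show MvPolynomial.eval x p = 0
        rw [hx, MvPolynomial.eval_eq_eval_mv_eval']
        convert h using 2
        · rfl
        · rfl
        · have htail : Fin.tail x = (e x).2 := by rw [he2]; funext j; simp [Fin.tail]
          rw [htail]
    rw [hkey]
    rw [hmp.measure_preimage]
    · rw [Measure.volume_eq_prod]
      calc (volume.prod volume) (Prod.swap ⁻¹' T')
          = (Measure.map Prod.swap ((volume : Measure ℂ).prod volume)) T' :=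
            (Measure.map_apply measurable_swap hT'meas).symm
        _ = (volume.prod volume) T' := by rw [Measure.prod_swap]
        _ = 0 := by rw [← Measure.volume_eq_prod]; exact hT'null
    · exact ((measurable_swap hT'meas).nullMeasurableSet)

lemma mv_zero_set_null_gen {ι : Type*} [Fintype ι] (p : MvPolynomial ι ℂ) (hp : p ≠ 0) :
    (volume : Measure (ι → ℂ)) {x | MvPolynomial.eval x p = 0} = 0 := by
  classical
  set N := Fintype.card ι with hN
  set e : Fin N ≃ ι := (Fintype.equivFin ι).symm with hedef
  have hmp : MeasurePreserving (MeasurableEquiv.piCongrLeft (fun _ : ι => ℂ) e)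
      volume volume := by
    rw [volume_pi, volume_pi]
    exact measurePreserving_piCongrLeft (fun _ : ι => (volume : Measure ℂ)) e
  have happly : ∀ (x : Fin N → ℂ) (i : ι),
      (MeasurableEquiv.piCongrLeft (fun _ : ι => ℂ) e) x i = x (e.symm i) := by
    intro x i
    have h1 := Equiv.piCongrLeft_apply_apply (fun _ : ι => ℂ) e x (e.symm i)
    rw [Equiv.apply_symm_apply] at h1
    exact h1
  have hq : MvPolynomial.rename e.symm p ≠ 0 := by
    intro h
    exact hp (MvPolynomial.rename_injective _ e.symm.injective (by simpa using h))
  have hpre : (MeasurableEquiv.piCongrLeft (fun _ : ι => ℂ) e) ⁻¹'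
      {x | MvPolynomial.eval x p = 0}
      = {x : Fin N → ℂ | MvPolynomial.eval x (MvPolynomial.rename e.symm p) = 0} := by
    ext x
    have hfe : ⇑(MeasurableEquiv.piCongrLeft (fun _ : ι => ℂ) e) x = x ∘ e.symm :=
      funext (happly x)
    simp only [Set.mem_preimage, Set.mem_setOf_eq, MvPolynomial.eval_rename, hfe]
  have := hmp.measure_preimage (s := {x : ι → ℂ | MvPolynomial.eval x p = 0}) ?_
  · rw [hpre] at this
    rw [← this]
    exact mv_zero_set_null N _ hq
  · exact ((measurable_mvpoly_eval p) (measurableSet_singleton 0)).nullMeasurableSet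

lemma measurePreserving_curry (m : ℕ) : ∀ (n : ℕ),
    MeasurePreserving (fun (f : Fin n × Fin m → ℂ) (i : Fin n) (j : Fin m) => f (i, j))
      (volume : Measure (Fin n × Fin m → ℂ)) (volume : Measure (Fin n → Fin m → ℂ)) := by
  intro n
  induction n with
  | zero =>
    constructor
    · exact measurable_of_countable _  -- maybe; fallback below
    · rw [volume_pi, volume_pi, Measure.pi_of_empty, Measure.pi_of_empty]
      rw [Measure.map_dirac' (measurable_of_countable _)]
      congr 1
      funext i
      exact i.elim0
  | succ n ihn =>
    -- κ : Fin m ⊕ (Fin n × Fin m) ≃ Fin (n+1) × Fin m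
    let κ : Fin m ⊕ (Fin n × Fin m) ≃ Fin (n + 1) × Fin m :=
      { toFun := fun u => Sum.elim (fun j => ((0 : Fin (n+1)), j))
          (fun p => (p.1.succ, p.2)) u
        invFun := fun p => Fin.cases (Sum.inl p.2) (fun i' => Sum.inr (i', p.2)) p.1
        left_inv := by rintro (j | ⟨i, j⟩) <;> simp
        right_inv := by
          rintro ⟨i, j⟩
          refine Fin.cases ?_ (fun i' => ?_) i <;> simp }
    have h1 : MeasurePreserving (MeasurableEquiv.piCongrLeft (fun _ : Fin (n+1) × Fin m => ℂ) κ)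
        volume volume := by
      rw [volume_pi, volume_pi]
      exact measurePreserving_piCongrLeft (fun _ => (volume : Measure ℂ)) κ
    have h2 := volume_measurePreserving_sumPiEquivProdPi
      (fun _ : Fin m ⊕ (Fin n × Fin m) => ℂ)
    have h3 : MeasurePreserving
        (Prod.map (id : (Fin m → ℂ) → (Fin m → ℂ))
          (fun (f : Fin n × Fin m → ℂ) (i : Fin n) (j : Fin m) => f (i, j)))
        (volume : Measure ((Fin m → ℂ) × (Fin n × Fin m → ℂ)))
        (volume : Measure ((Fin m → ℂ) × (Fin n → Fin m → ℂ))) := by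
      rw [Measure.volume_eq_prod, Measure.volume_eq_prod]
      exact (MeasurePreserving.id _).prod ihn
    have h4 := (volume_preserving_piFinSuccAbove (fun _ : Fin (n+1) => (Fin m → ℂ)) 0).symm
      (MeasurableEquiv.piFinSuccAbove (fun _ : Fin (n+1) => (Fin m → ℂ)) 0)
    have hcomp := ((h4.comp (h3.comp h2)).comp h1.symm :
      MeasurePreserving
        (⇑(MeasurableEquiv.piFinSuccAbove (fun _ : Fin (n+1) => (Fin m → ℂ)) 0).symm ∘
          ((Prod.map (id : (Fin m → ℂ) → (Fin m → ℂ))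
            (fun (f : Fin n × Fin m → ℂ) (i : Fin n) (j : Fin m) => f (i, j))) ∘
          (⇑(MeasurableEquiv.sumPiEquivProdPi (fun _ : Fin m ⊕ (Fin n × Fin m) => ℂ)) ∘
            ⇑(MeasurableEquiv.piCongrLeft (fun _ : Fin (n+1) × Fin m => ℂ) κ).symm)))
        volume volume)
    have hfun : (fun (f : Fin (n+1) × Fin m → ℂ) (i : Fin (n+1)) (j : Fin m) => f (i, j))
        = ⇑(MeasurableEquiv.piFinSuccAbove (fun _ : Fin (n+1) => (Fin m → ℂ)) 0).symm ∘
          ((Prod.map (id : (Fin m → ℂ) → (Fin m → ℂ))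
            (fun (f : Fin n × Fin m → ℂ) (i : Fin n) (j : Fin m) => f (i, j))) ∘
          (⇑(MeasurableEquiv.sumPiEquivProdPi (fun _ : Fin m ⊕ (Fin n × Fin m) => ℂ)) ∘
            ⇑(MeasurableEquiv.piCongrLeft (fun _ : Fin (n+1) × Fin m => ℂ) κ).symm)) := by
      funext f
      have hg : ∀ u, (MeasurableEquiv.piCongrLeft (fun _ : Fin (n+1) × Fin m => ℂ) κ).symm f u
          = f (κ u) := by
        intro u
        have : (MeasurableEquiv.piCongrLeft (fun _ : Fin (n+1) × Fin m => ℂ) κ)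
            (fun u => f (κ u)) = f := by
          funext p
          obtain ⟨u, rfl⟩ := κ.surjective p
          exact Equiv.piCongrLeft_apply_apply (fun _ => ℂ) κ _ u
        have h2 := congrArg
          (fun h => ((MeasurableEquiv.piCongrLeft (fun _ : Fin (n+1) × Fin m => ℂ) κ).symm h) u)
          this
        simpa using h2.symm
      simp only [Function.comp_apply]
      have hmain : (MeasurableEquiv.piFinSuccAbove (fun _ : Fin (n+1) => (Fin m → ℂ)) 0)
          (fun (i : Fin (n+1)) (j : Fin m) => f (i, j))
          = Prod.map (id : (Fin m → ℂ) → (Fin m → ℂ))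
              (fun (f : Fin n × Fin m → ℂ) (i : Fin n) (j : Fin m) => f (i, j))
            ((MeasurableEquiv.sumPiEquivProdPi (fun _ : Fin m ⊕ (Fin n × Fin m) => ℂ))
              ((MeasurableEquiv.piCongrLeft (fun _ : Fin (n+1) × Fin m => ℂ) κ).symm f)) := by
        have hL2 : ∀ (i : Fin n), (0 : Fin (n+1)).succAbove i = i.succ := by
          simp [Fin.succAbove_zero]
        refine Prod.ext ?_ ?_
        · funext j
          exact (hg (Sum.inl j)).symm
        · funext i j
          show f ((0 : Fin (n+1)).succAbove i, j) = _
          rw [hL2]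
          exact (hg (Sum.inr (i, j))).symm
      rw [← hmain, MeasurableEquiv.symm_apply_apply]
    rw [hfun]
    exact hcomp

lemma key_arith {m₁ m₂ n j j' k k' : ℕ} (hj : j < m₁) (hj' : j' < m₁)
    (hk : k < m₂) (hk' : k' < m₂) (hn : m₁ * m₂ ≤ n) :
    ((n - j' + (j + m₁ * k)) % n = m₁ * k') ↔ (j = j' ∧ k = k') := by
  have hm₁ : 0 < m₁ := by omega
  have hjk : j + m₁ * k < m₁ * m₂ := by
    calc j + m₁ * k < m₁ + m₁ * k := by omega
    _ = m₁ * (k + 1) := by ring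
    _ ≤ m₁ * m₂ := Nat.mul_le_mul_left _ (by omega)
  have hjk' : j' + m₁ * k' < m₁ * m₂ := by
    calc j' + m₁ * k' < m₁ + m₁ * k' := by omega
    _ = m₁ * (k' + 1) := by ring
    _ ≤ m₁ * m₂ := Nat.mul_le_mul_left _ (by omega)
  have hnpos : 0 < n := by omega
  constructor
  · intro hmod
    have heq : j + m₁ * k = j' + m₁ * k' := by
      rcases le_or_gt j' (j + m₁ * k) with hle | hlt
      · have h1 : n - j' + (j + m₁ * k) = (j + m₁ * k - j') + n := by omega
        rw [h1, Nat.add_mod_right, Nat.mod_eq_of_lt (by omega)] at hmod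
        omega
      · have h1 : n - j' + (j + m₁ * k) < n := by omega
        rw [Nat.mod_eq_of_lt h1] at hmod
        omega
    have hj_eq : j = j' := by
      have h1 := congrArg (· % m₁) heq
      simpa [Nat.add_mul_mod_self_left, Nat.mod_eq_of_lt hj, Nat.mod_eq_of_lt hj'] using h1
    refine ⟨hj_eq, ?_⟩
    have : m₁ * k = m₁ * k' := by omega
    exact Nat.eq_of_mul_eq_mul_left (by omega) this
  · rintro ⟨rfl, rfl⟩
    have h1 : n - j + (j + m₁ * k) = m₁ * k + n := by omega
    rw [h1, Nat.add_mod_right, Nat.mod_eq_of_lt (by omega)]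

lemma rank_one_eq {m₁ m₂ : ℕ} (x x₀ : Fin m₁ → ℂ) (y y₀ : Fin m₂ → ℂ)
    (hx₀ : x₀ ≠ 0) (hy₀ : y₀ ≠ 0) (h : ∀ j k, x j * y k = x₀ j * y₀ k) :
    ∃ σ : ℂ, σ ≠ 0 ∧ x = σ • x₀ ∧ y = σ⁻¹ • y₀ := by
  obtain ⟨j₀, hj₀⟩ : ∃ j, x₀ j ≠ 0 := by
    by_contra hc; push_neg at hc; exact hx₀ (funext fun j => hc j)
  obtain ⟨k₀, hk₀⟩ : ∃ k, y₀ k ≠ 0 := by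
    by_contra hc; push_neg at hc; exact hy₀ (funext fun k => hc k)
  have h00 : x j₀ * y k₀ = x₀ j₀ * y₀ k₀ := h j₀ k₀
  have hne : x j₀ * y k₀ ≠ 0 := by rw [h00]; exact mul_ne_zero hj₀ hk₀
  have hxj₀ : x j₀ ≠ 0 := fun hc => hne (by rw [hc, zero_mul])
  have hyk₀ : y k₀ ≠ 0 := fun hc => hne (by rw [hc, mul_zero])
  refine ⟨x j₀ / x₀ j₀, div_ne_zero hxj₀ hj₀, ?_, ?_⟩
  · funext j
    have h1 := h j k₀
    have h2 : x j * x₀ j₀ = x j₀ * x₀ j := by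
      have := mul_right_cancel₀ hyk₀ (show x j * x₀ j₀ * y k₀ = x j₀ * x₀ j * y k₀ by
        calc x j * x₀ j₀ * y k₀ = x₀ j₀ * (x j * y k₀) := by ring
        _ = x₀ j₀ * (x₀ j * y₀ k₀) := by rw [h1]
        _ = x₀ j * (x₀ j₀ * y₀ k₀) := by ring
        _ = x₀ j * (x j₀ * y k₀) := by rw [h00]
        _ = x j₀ * x₀ j * y k₀ := by ring)
      exact this
    show x j = x j₀ / x₀ j₀ * x₀ j
    field_simp
    linear_combination h2
  · funext k
    have h1 := h j₀ k
    show y k = (x j₀ / x₀ j₀)⁻¹ * y₀ k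
    rw [inv_div]
    field_simp
    linear_combination h1

/-- Theorem 3.4 (subspace constraints): if `n ≥ m₁m₂`, then for almost all `D, E`, every
`(x₀,y₀)` with `x₀ ≠ 0`, `y₀ ≠ 0` is identifiable up to scaling from `(Dx₀) ⊛ (Ey₀)`. -/
theorem blind_deconv_subspace_identifiability {n m₁ m₂ : ℕ} (h : m₁ * m₂ ≤ n) :
    ∀ᵐ DE : (Fin n → Fin m₁ → ℂ) × (Fin n → Fin m₂ → ℂ) ∂volume,
      ∀ x₀ : Fin m₁ → ℂ, ∀ y₀ : Fin m₂ → ℂ, x₀ ≠ 0 → y₀ ≠ 0 →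
        ∀ x : Fin m₁ → ℂ, ∀ y : Fin m₂ → ℂ,
          cconv (mulVecF DE.1 x) (mulVecF DE.2 y) =
            cconv (mulVecF DE.1 x₀) (mulVecF DE.2 y₀) →
          ∃ σ : ℂ, σ ≠ 0 ∧ x = σ • x₀ ∧ y = σ⁻¹ • y₀ := by
  classical
  rcases Nat.eq_zero_or_pos m₁ with hm₁ | hm₁
  · subst hm₁
    filter_upwards with de x₀ y₀ hx₀
    exact absurd (funext fun j => j.elim0) hx₀
  rcases Nat.eq_zero_or_pos m₂ with hm₂ | hm₂
  · subst hm₂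
    filter_upwards with de x₀ y₀ hx₀ hy₀
    exact absurd (funext fun k => k.elim0) hy₀
  have hn : 0 < n := lt_of_lt_of_le (Nat.mul_pos hm₁ hm₂) h
  have hemb_lt : ∀ p : Fin m₁ × Fin m₂, (p.1 : ℕ) + m₁ * (p.2 : ℕ) < n := by
    intro p
    refine lt_of_lt_of_le ?_ h
    calc (p.1 : ℕ) + m₁ * p.2 < m₁ + m₁ * p.2 := by have := p.1.2; omega
    _ = m₁ * (p.2 + 1) := by ring
    _ ≤ m₁ * m₂ := Nat.mul_le_mul_left _ (by have := p.2.2; omega)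
  set emb : Fin m₁ × Fin m₂ → Fin n := fun p => ⟨(p.1 : ℕ) + m₁ * (p.2 : ℕ), hemb_lt p⟩
    with hembdef
  set Mmat : (Fin n → Fin m₁ → ℂ) → (Fin n → Fin m₂ → ℂ) →
      Matrix (Fin m₁ × Fin m₂) (Fin m₁ × Fin m₂) ℂ :=
    fun D E r c => ∑ l : Fin n, D l c.1 * E (emb r - l) c.2 with hMdef
  -- a.e. the determinant is nonzero
  have hae : ∀ᵐ de : (Fin n → Fin m₁ → ℂ) × (Fin n → Fin m₂ → ℂ) ∂volume,
      (Mmat de.1 de.2).det ≠ 0 := by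
    set ι := (Fin n × Fin m₁) ⊕ (Fin n × Fin m₂) with hιdef
    set Φ : (ι → ℂ) → (Fin n → Fin m₁ → ℂ) × (Fin n → Fin m₂ → ℂ) := fun g =>
      (fun i j => g (Sum.inl (i, j)), fun i k => g (Sum.inr (i, k))) with hΦdef
    have hΦ : MeasurePreserving Φ volume volume := by
      have h1 := volume_measurePreserving_sumPiEquivProdPi (fun _ : ι => ℂ)
      have h2 : MeasurePreserving
          (Prod.map (fun (f : Fin n × Fin m₁ → ℂ) (i : Fin n) (j : Fin m₁) => f (i, j))
            (fun (f : Fin n × Fin m₂ → ℂ) (i : Fin n) (k : Fin m₂) => f (i, k)))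
          (volume : Measure ((Fin n × Fin m₁ → ℂ) × (Fin n × Fin m₂ → ℂ)))
          (volume : Measure ((Fin n → Fin m₁ → ℂ) × (Fin n → Fin m₂ → ℂ))) := by
        rw [Measure.volume_eq_prod, Measure.volume_eq_prod]
        exact (measurePreserving_curry m₁ n).prod (measurePreserving_curry m₂ n)
      exact h2.comp h1
    set Ment : Matrix (Fin m₁ × Fin m₂) (Fin m₁ × Fin m₂) (MvPolynomial ι ℂ) :=
      fun r c => ∑ l : Fin n,
        MvPolynomial.X (Sum.inl (l, c.1)) * MvPolynomial.X (Sum.inr (emb r - l, c.2))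
      with hMentdef
    set P : MvPolynomial ι ℂ := Ment.det with hPdef
    have heval : ∀ g : ι → ℂ, MvPolynomial.eval g P = (Mmat (Φ g).1 (Φ g).2).det := by
      intro g
      rw [hPdef, RingHom.map_det (MvPolynomial.eval g) Ment]
      congr 1
      funext r c
      show MvPolynomial.eval g (Ment r c) = _
      simp [RingHom.mapMatrix_apply, Matrix.map_apply, hMentdef, hMdef, hΦdef]
    -- witness
    set g₀ : ι → ℂ := Sum.elim
        (fun li => if (li.1 : ℕ) = (li.2 : ℕ) then 1 else 0)
        (fun ik => if (ik.1 : ℕ) = m₁ * (ik.2 : ℕ) then 1 else 0) with hg₀def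
    have hwitness : Mmat (Φ g₀).1 (Φ g₀).2 = 1 := by
      funext r c
      have hc1n : (c.1 : ℕ) < n := by
        refine lt_of_lt_of_le ?_ h
        have h1 := c.1.2
        calc (c.1 : ℕ) < m₁ := h1
        _ = m₁ * 1 := by ring
        _ ≤ m₁ * m₂ := Nat.mul_le_mul_left _ hm₂
      set l₀ : Fin n := ⟨(c.1 : ℕ), hc1n⟩ with hl₀def
      have hterm : ∀ l : Fin n,
          (Φ g₀).1 l c.1 * (Φ g₀).2 (emb r - l) c.2
          = if l = l₀ then (if ((emb r - l : Fin n) : ℕ) = m₁ * (c.2 : ℕ) then (1:ℂ) else 0)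
            else 0 := by
        intro l
        simp only [hΦdef, hg₀def, Sum.elim_inl, Sum.elim_inr]
        by_cases hl : l = l₀
        · subst hl
          simp [hl₀def]
        · have : ¬ ((l : ℕ) = (c.1 : ℕ)) := fun hc => hl (Fin.ext hc)
          simp [this, hl]
      have hsum : (Mmat (Φ g₀).1 (Φ g₀).2) r c
          = if ((emb r - l₀ : Fin n) : ℕ) = m₁ * (c.2 : ℕ) then (1:ℂ) else 0 := by
        rw [hMdef]
        simp only []
        rw [Finset.sum_congr rfl fun l _ => hterm l, Finset.sum_ite_eq' Finset.univ l₀]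
        simp
      rw [hsum, Matrix.one_apply]
      have hval : ((emb r - l₀ : Fin n) : ℕ) = (n - (c.1 : ℕ) + ((r.1 : ℕ) + m₁ * (r.2 : ℕ))) % n := by
        rw [Fin.sub_def]
      have hiff := key_arith r.1.2 c.1.2 r.2.2 c.2.2 h
      by_cases hrc : r = c
      · subst hrc
        rw [if_pos rfl, hval, if_pos (hiff.mpr ⟨rfl, rfl⟩)]
      · have : ¬ (((emb r - l₀ : Fin n) : ℕ) = m₁ * (c.2 : ℕ)) := by
          rw [hval]
          intro hcon
          exact hrc (Prod.ext (Fin.ext (hiff.mp hcon).1) (Fin.ext (hiff.mp hcon).2))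
        rw [if_neg this, if_neg hrc]
    have hP : P ≠ 0 := by
      intro h0
      have h1 := heval g₀
      rw [h0, map_zero, hwitness, Matrix.det_one] at h1
      exact one_ne_zero h1.symm
    have hcont : Continuous fun de : (Fin n → Fin m₁ → ℂ) × (Fin n → Fin m₂ → ℂ) =>
        (Mmat de.1 de.2).det := by
      apply Continuous.matrix_det
      apply continuous_matrix
      intro r c
      apply continuous_finset_sum
      intro l _
      fun_prop
    have hmeas : MeasurableSet {de : (Fin n → Fin m₁ → ℂ) × (Fin n → Fin m₂ → ℂ) |
        (Mmat de.1 de.2).det = 0} := hcont.measurable (measurableSet_singleton 0)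
    have hnull : volume {de : (Fin n → Fin m₁ → ℂ) × (Fin n → Fin m₂ → ℂ) |
        (Mmat de.1 de.2).det = 0} = 0 := by
      rw [← hΦ.measure_preimage hmeas.nullMeasurableSet]
      have hpre : Φ ⁻¹' {de | (Mmat de.1 de.2).det = 0}
          = {g : ι → ℂ | MvPolynomial.eval g P = 0} := by
        ext g
        simp only [Set.mem_preimage, Set.mem_setOf_eq, heval g]
      rw [hpre]
      exact mv_zero_set_null_gen P hP
    rw [MeasureTheory.ae_iff]
    convert hnull using 2
    ext de
    simp
  -- main conclusion
  filter_upwards [hae] with de hdet x₀ y₀ hx₀ hy₀ x y hconv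
  have hexp : ∀ (x : Fin m₁ → ℂ) (y : Fin m₂ → ℂ) (i : Fin n),
      cconv (mulVecF de.1 x) (mulVecF de.2 y) i
      = ∑ p : Fin m₁ × Fin m₂, (x p.1 * y p.2) * (∑ l, de.1 l p.1 * de.2 (i - l) p.2) := by
    intro x y i
    show (∑ l : Fin n, mulVecF de.1 x l * mulVecF de.2 y (i - l)) = _
    simp only [mulVecF]
    calc ∑ l : Fin n, (∑ j, de.1 l j * x j) * (∑ k, de.2 (i - l) k * y k)
        = ∑ l : Fin n, ∑ j, ∑ k, (de.1 l j * x j) * (de.2 (i - l) k * y k) := by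
          refine Finset.sum_congr rfl fun l _ => ?_
          rw [Finset.sum_mul_sum]
      _ = ∑ j, ∑ l : Fin n, ∑ k, (de.1 l j * x j) * (de.2 (i - l) k * y k) :=
          Finset.sum_comm
      _ = ∑ j, ∑ k, ∑ l : Fin n, (de.1 l j * x j) * (de.2 (i - l) k * y k) :=
          Finset.sum_congr rfl fun j _ => Finset.sum_comm
      _ = ∑ p : Fin m₁ × Fin m₂, (x p.1 * y p.2) * (∑ l, de.1 l p.1 * de.2 (i - l) p.2) := by
          rw [Fintype.sum_prod_type]
          refine Finset.sum_congr rfl fun j _ => Finset.sum_congr rfl fun k _ => ?_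
          rw [Finset.mul_sum]
          exact Finset.sum_congr rfl fun l _ => by ring
  set w : Fin m₁ × Fin m₂ → ℂ := fun p => x p.1 * y p.2 - x₀ p.1 * y₀ p.2 with hwdef
  have hw : (Mmat de.1 de.2).mulVec w = 0 := by
    funext r
    have h1 := congrFun hconv (emb r)
    rw [hexp x y (emb r), hexp x₀ y₀ (emb r)] at h1
    simp only [Matrix.mulVec, dotProduct, hMdef, hwdef, Pi.zero_apply]
    calc ∑ p : Fin m₁ × Fin m₂, (∑ l, de.1 l p.1 * de.2 (emb r - l) p.2)
          * (x p.1 * y p.2 - x₀ p.1 * y₀ p.2)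
        = (∑ p : Fin m₁ × Fin m₂, (x p.1 * y p.2) * (∑ l, de.1 l p.1 * de.2 (emb r - l) p.2))
          - ∑ p : Fin m₁ × Fin m₂, (x₀ p.1 * y₀ p.2) * (∑ l, de.1 l p.1 * de.2 (emb r - l) p.2) := by
          rw [← Finset.sum_sub_distrib]
          exact Finset.sum_congr rfl fun p _ => by ring
      _ = 0 := by rw [← h1]; exact sub_self _
  have hw0 : w = 0 := by
    have hM := Matrix.nonsing_inv_mul (Mmat de.1 de.2) (isUnit_iff_ne_zero.mpr hdet)
    calc w = (1 : Matrix (Fin m₁ × Fin m₂) (Fin m₁ × Fin m₂) ℂ).mulVec w :=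
          (Matrix.one_mulVec w).symm
      _ = ((Mmat de.1 de.2)⁻¹ * Mmat de.1 de.2).mulVec w := by rw [hM]
      _ = (Mmat de.1 de.2)⁻¹.mulVec ((Mmat de.1 de.2).mulVec w) :=
          (Matrix.mulVec_mulVec _ _ _).symm
      _ = 0 := by rw [hw, Matrix.mulVec_zero]
  exact rank_one_eq x x₀ y y₀ hx₀ hy₀ fun j k =>
    sub_eq_zero.mp (congrFun hw0 (j, k))
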